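/- Let φ: V → W be a surjective linear map between finite-dimensional real vector spaces and L_V ⊆ V ⊕ V* a maximal isotropic subspace. Then the forward image φ*L_V = {(φ(Y), α) : (Y, φᵀα) ∈ L_V} is maximal isotropic in W ⊕ W*, i.e., it has dimension dim W. -/

import Mathlib

open Module Submodule LinearMap

/-- The canonical pairing bilinear form on `V × V*`. -/
noncomputable def pairB (K V : Type*) [Field K] [AddCommGroup V] [Module K V] :
    LinearMap.BilinForm K (V × Module.Dual K V) :=
  LinearMap.mk₂ K (fun x y => y.2 x.1 + x.2 y.1)
    (fun x x' y => by simp; ring)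
    (fun c x y => by simp [mul_add])
    (fun x y y' => by simp; ring)
    (fun c x y => by simp [mul_add])

section Pair

variable (K V : Type*) [Field K] [AddCommGroup V] [Module K V]

lemma pairB_apply (x y : V × Module.Dual K V) : pairB K V x y = y.2 x.1 + x.2 y.1 := rfl

lemma pairB_refl : (pairB K V).IsRefl := fun x y h => by
  rw [pairB_apply] at h ⊢; rw [add_comm]; exact h

lemma pairB_orth_sup (p q : Submodule K (V × Module.Dual K V)) :
    (pairB K V).orthogonal (p ⊔ q) = (pairB K V).orthogonal p ⊓ (pairB K V).orthogonal q := by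
  ext x
  simp only [LinearMap.BilinForm.mem_orthogonal_iff, Submodule.mem_inf]
  constructor
  · exact fun h => ⟨fun n hn => h n (le_sup_left (a := p) (b := q) hn),
      fun n hn => h n (le_sup_right (a := p) (b := q) hn)⟩
  · rintro ⟨h1, h2⟩ n hn
    rcases Submodule.mem_sup.mp hn with ⟨y, hy, z, hz, rfl⟩
    have := h1 y hy
    have := h2 z hz
    simp [map_add, *]

lemma pairB_orth_prod (N : Submodule K V) :
    (pairB K V).orthogonal (N.prod ⊥) = (⊤ : Submodule K V).prod N.dualAnnihilator := by
  ext x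
  simp only [LinearMap.BilinForm.mem_orthogonal_iff, Submodule.mem_prod, Submodule.mem_top,
    true_and, Submodule.mem_dualAnnihilator, LinearMap.BilinForm.isOrtho_def]
  constructor
  · intro h Y hY
    have := h (Y, 0) ⟨hY, Submodule.mem_bot _ |>.mpr rfl⟩
    simpa [pairB] using this
  · rintro h ⟨Y, β⟩ ⟨hY, hβ⟩
    rw [Submodule.mem_bot] at hβ
    subst hβ
    simpa [pairB] using h Y hY

variable [FiniteDimensional K V]

lemma pairB_nondeg : (pairB K V).Nondegenerate := by
  refine (pairB_refl K V).nondegenerate_iff_separatingLeft.mpr ?_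
  intro x hx
  have h1 : x.1 = 0 := by
    rw [← Module.forall_dual_apply_eq_zero_iff K x.1]
    intro β
    have := hx (0, β)
    simpa [pairB_apply] using this
  have h2 : x.2 = 0 := by
    ext Y
    have := hx (Y, 0)
    simpa [pairB_apply] using this
  exact Prod.ext h1 h2

end Pair

/-- rank-nullity for the image of a submodule. -/
lemma finrank_map_add_finrank_inf_ker {K M M₂ : Type*} [Field K] [AddCommGroup M] [Module K M]
    [AddCommGroup M₂] [Module K M₂] [FiniteDimensional K M]
    (f : M →ₗ[K] M₂) (p : Submodule K M) :
    finrank K (p.map f) + finrank K (p ⊓ ker f : Submodule K M) = finrank K p := by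
  have h := LinearMap.finrank_range_add_finrank_ker (f.comp p.subtype)
  rw [LinearMap.range_comp, Submodule.range_subtype, LinearMap.ker_comp] at h
  rw [← h, ← Submodule.finrank_map_subtype_eq p (comap p.subtype (ker f)),
    Submodule.map_comap_subtype]

lemma range_prodMap' {K M M₂ M₃ M₄ : Type*} [Field K] [AddCommGroup M] [Module K M]
    [AddCommGroup M₂] [Module K M₂] [AddCommGroup M₃] [Module K M₃] [AddCommGroup M₄] [Module K M₄]
    (f : M →ₗ[K] M₂) (g : M₃ →ₗ[K] M₄) :
    range (f.prodMap g) = (range f).prod (range g) := by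
  ext z
  constructor
  · rintro ⟨⟨x, y⟩, rfl⟩
    exact ⟨⟨x, rfl⟩, ⟨y, rfl⟩⟩
  · rintro ⟨⟨x, hx⟩, ⟨y, hy⟩⟩
    exact ⟨(x, y), by simp [LinearMap.prodMap_apply, hx, hy]⟩

lemma map_prodMap' {K M M₂ M₃ M₄ : Type*} [Field K] [AddCommGroup M] [Module K M]
    [AddCommGroup M₂] [Module K M₂] [AddCommGroup M₃] [Module K M₃] [AddCommGroup M₄] [Module K M₄]
    (f : M →ₗ[K] M₂) (g : M₃ →ₗ[K] M₄) (p : Submodule K M) (q : Submodule K M₃) :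
    (p.prod q).map (f.prodMap g) = (p.map f).prod (q.map g) := by
  ext z
  constructor
  · rintro ⟨⟨x, y⟩, ⟨hx, hy⟩, rfl⟩
    exact ⟨⟨x, hx, rfl⟩, ⟨y, hy, rfl⟩⟩
  · rintro ⟨⟨x, hx, hx'⟩, ⟨y, hy, hy'⟩⟩
    exact ⟨(x, y), ⟨hx, hy⟩, by simp [LinearMap.prodMap_apply, hx', hy']⟩

lemma finrank_map_of_injective' {K M M₂ : Type*} [Field K] [AddCommGroup M] [Module K M]
    [AddCommGroup M₂] [Module K M₂] (g : M →ₗ[K] M₂) (hg : Function.Injective g)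
    (p : Submodule K M) : finrank K (p.map g) = finrank K p :=
  ((Submodule.equivMapOfInjective g hg p).finrank_eq).symm

lemma finrank_prod_bot {K M M₂ : Type*} [Field K] [AddCommGroup M] [Module K M]
    [AddCommGroup M₂] [Module K M₂] [FiniteDimensional K M]
    (p : Submodule K M) :
    finrank K (p.prod (⊥ : Submodule K M₂)) = finrank K p := by
  rw [LinearMap.prod_eq_sup_map, Submodule.map_bot, sup_bot_eq]
  exact finrank_map_of_injective' _ LinearMap.inl_injective p

/-- The forward image of a maximal isotropic subspace `L_V ⊆ V ⊕ V*` under a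
surjective linear map `φ : V → W` is maximal isotropic in `W ⊕ W*`:
it has dimension `dim W`. -/
theorem stmt_8 (V W : Type*) [AddCommGroup V] [Module ℝ V] [FiniteDimensional ℝ V]
    [AddCommGroup W] [Module ℝ W] [FiniteDimensional ℝ W]
    (φ : V →ₗ[ℝ] W) (hsurj : Function.Surjective φ)
    (LV : Submodule ℝ (V × Module.Dual ℝ V))
    (hiso : ∀ a ∈ LV, ∀ b ∈ LV, b.2 a.1 + a.2 b.1 = 0)
    (hdim : Module.finrank ℝ LV = Module.finrank ℝ V) :
    Module.finrank ℝ
      (Submodule.map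
        (LinearMap.prodMap φ (LinearMap.id : Module.Dual ℝ W →ₗ[ℝ] Module.Dual ℝ W))
        (Submodule.comap
          (LinearMap.prodMap (LinearMap.id : V →ₗ[ℝ] V) φ.dualMap) LV))
      = Module.finrank ℝ W := by
  classical
  have hrefl := pairB_refl ℝ V
  have hnd := pairB_nondeg ℝ V
  set n := finrank ℝ V with hn
  set N := ker φ with hN
  set NN : Submodule ℝ (V × Module.Dual ℝ V) := N.prod ⊥ with hNN
  set g : (V × Module.Dual ℝ W) →ₗ[ℝ] (V × Module.Dual ℝ V) :=
    LinearMap.prodMap LinearMap.id φ.dualMap with hg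
  set f : (V × Module.Dual ℝ W) →ₗ[ℝ] (W × Module.Dual ℝ W) :=
    LinearMap.prodMap φ LinearMap.id with hf
  set K : Submodule ℝ (V × Module.Dual ℝ W) := Submodule.comap g LV with hK
  -- basic dimension facts
  have hE : finrank ℝ (V × Module.Dual ℝ V) = n + n := by
    rw [Module.finrank_prod, Subspace.dual_finrank_eq]
  have hrn : finrank ℝ W + finrank ℝ N = n := by
    have := LinearMap.finrank_range_add_finrank_ker φ
    rwa [LinearMap.range_eq_top.mpr hsurj, finrank_top] at this
  -- LV is its own orthogonal
  have hLVle : LV ≤ (pairB ℝ V).orthogonal LV := by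
    intro x hx
    rw [LinearMap.BilinForm.mem_orthogonal_iff]
    intro a ha
    rw [pairB_apply]
    exact hiso a ha x hx
  have hOLV : finrank ℝ ((pairB ℝ V).orthogonal LV) = n := by
    have h := LinearMap.BilinForm.finrank_add_finrank_orthogonal hrefl LV
    rw [LinearMap.BilinForm.orthogonal_top_eq_bot hnd, inf_bot_eq, finrank_bot, add_zero, hE, hdim] at h
    omega
  have hLV : LV = (pairB ℝ V).orthogonal LV :=
    Submodule.eq_of_le_of_finrank_le hLVle (by rw [hOLV, hdim])
  -- g is injective
  have hginj : Function.Injective g := by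
    rw [hg, LinearMap.coe_prodMap]
    exact Function.Injective.prodMap (fun a b h => h)
      (LinearMap.dualMap_injective_of_surjective hsurj)
  -- range of g
  have hrg : range g = (⊤ : Submodule ℝ V).prod N.dualAnnihilator := by
    rw [hg, range_prodMap', LinearMap.range_id, φ.range_dualMap_eq_dualAnnihilator_ker]
  -- kernel of f
  have hkf : ker f = N.prod ⊥ := by
    rw [hf, LinearMap.ker_prodMap, LinearMap.ker_id]
  -- dimension of K
  have hKd : finrank ℝ K = finrank ℝ (LV ⊓ ((⊤ : Submodule ℝ V).prod N.dualAnnihilator) :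
      Submodule ℝ (V × Module.Dual ℝ V)) := by
    rw [← finrank_map_of_injective' g hginj K, hK, Submodule.map_comap_eq, hrg, inf_comm]
  -- key dimension identity via orthogonality
  have hkey : LV ⊓ ((⊤ : Submodule ℝ V).prod N.dualAnnihilator) = (pairB ℝ V).orthogonal (LV ⊔ NN) := by
    rw [pairB_orth_sup, ← hLV, hNN, pairB_orth_prod]
  have horth : finrank ℝ (LV ⊔ NN : Submodule ℝ (V × Module.Dual ℝ V)) +
      finrank ℝ ((pairB ℝ V).orthogonal (LV ⊔ NN)) = n + n := by
    have h := LinearMap.BilinForm.finrank_add_finrank_orthogonal hrefl (LV ⊔ NN)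
    rwa [LinearMap.BilinForm.orthogonal_top_eq_bot hnd, inf_bot_eq, finrank_bot, add_zero, hE] at h
  have hsup : finrank ℝ (LV ⊔ NN : Submodule ℝ (V × Module.Dual ℝ V)) +
      finrank ℝ (LV ⊓ NN : Submodule ℝ (V × Module.Dual ℝ V)) = n + finrank ℝ N := by
    rw [Submodule.finrank_sup_add_finrank_inf_eq, hdim, hNN, finrank_prod_bot]
  -- dimension of K ⊓ ker f
  have hKk : finrank ℝ (K ⊓ ker f : Submodule ℝ (V × Module.Dual ℝ W)) =
      finrank ℝ (LV ⊓ NN : Submodule ℝ (V × Module.Dual ℝ V)) := by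
    rw [← finrank_map_of_injective' g hginj (K ⊓ ker f), inf_comm, hK,
      ← Submodule.map_inf_eq_map_inf_comap, hkf, map_prodMap', Submodule.map_id,
      Submodule.map_bot, ← hNN, inf_comm]
  -- rank-nullity for the image
  have hfin := finrank_map_add_finrank_inf_ker f K
  rw [hKk, hKd, hkey] at hfin
  omega
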